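/- Let Y_1, ..., Y_m be independent real random variables with Y_i = θ_i + Z_i. Fix k ≤ m and constants c̲_i, c̄_i > 0 with P(Z_i > c̲_i) ≤ λ̲ and P(Z_i < -c̄_i) ≤ λ̄ for all i. Let S(Y) be the set of indices of the k largest values among Y_1, ..., Y_m (ties broken lexicographically). Then the probability that there exists i ∈ S(Y) with θ_i ∉ [Y_i - c̲_i, Y_i + c̄_i] is at most m·λ̲ + k·λ̄. -/

import Mathlib

open MeasureTheory ProbabilityTheory
open Finset
open scoped ENNReal

namespace Stmt4Aux

variable {m : ℕ}

abbrev K (m : ℕ) := ℝ ×ₗ (ℕ ×ₗ (Fin m)ᵒᵈ)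

noncomputable def mkKey (j : Fin m) (t c s : ℝ) : K m :=
  toLex (t + s, toLex ((if s < -c then 1 else 0 : ℕ), OrderDual.toDual j))

lemma mkKey_lt_iff {j j' : Fin m} {t c s t' c' s' : ℝ} :
    mkKey j t c s < mkKey j' t' c' s' ↔
      t + s < t' + s' ∨ (t + s = t' + s' ∧
        ((¬ s < -c ∧ s' < -c') ∨ ((s < -c ↔ s' < -c') ∧ j' < j))) := by
  simp only [mkKey, Prod.Lex.lt_iff, OrderDual.toDual_lt_toDual]
  by_cases p : s < -c <;> by_cases q : s' < -c' <;> simp [p, q]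

lemma mkKey_inj {j j' : Fin m} {t c s t' c' s' : ℝ}
    (h : mkKey j t c s = mkKey j' t' c' s') : j = j' := by
  simp only [mkKey] at h
  have := congrArg (fun x => (ofLex (ofLex x).2).2) h
  simpa using this

lemma fst_le_of_mkKey_le {j j' : Fin m} {t c s t' c' s' : ℝ}
    (h : mkKey j t c s ≤ mkKey j' t' c' s') : t + s ≤ t' + s' := by
  rcases h.lt_or_eq with h | h
  · rcases mkKey_lt_iff.1 h with h | ⟨h, _⟩
    · exact h.le
    · exact h.le
  · have := congrArg (fun x => (ofLex x).1) h
    simp only [mkKey] at this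
    simpa using this.le

/-- at most `k` indices have fewer than `k` others ranked above them -/
lemma card_low_rank_le {L : Type*} [LinearOrder L] (f : Fin m → L)
    (hf : Function.Injective f) (k : ℕ) :
    (univ.filter fun i => (univ.filter fun j => f i < f j).card < k).card ≤ k := by
  classical
  set g : Fin m → ℕ := fun i => (univ.filter fun j => f i < f j).card with hg
  have hanti : ∀ i i', f i < f i' → g i' < g i := by
    intro i i' h
    have hsub : insert i' (univ.filter fun j => f i' < f j) ⊆
        univ.filter fun j => f i < f j := by
      intro x hx
      rcases Finset.mem_insert.1 hx with rfl | hx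
      · simp [h]
      · simp only [Finset.mem_filter, Finset.mem_univ, true_and] at hx ⊢
        exact h.trans hx
    have hni : i' ∉ (univ.filter fun j => f i' < f j) := by simp
    have h2 := Finset.card_le_card hsub
    rw [Finset.card_insert_of_notMem hni] at h2
    simp only [hg]
    omega
  have hinj : Function.Injective g := by
    intro i i' h
    rcases lt_trichotomy (f i) (f i') with hlt | heq | hgt
    · exact absurd h (by have := hanti _ _ hlt; omega)
    · exact hf heq
    · exact absurd h (by have := hanti _ _ hgt; omega)
  calc (univ.filter fun i => g i < k).card
      = ((univ.filter fun i => g i < k).image g).card :=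
        (Finset.card_image_of_injective _ hinj).symm
    _ ≤ (Finset.range k).card := by
        apply Finset.card_le_card
        intro x hx
        simp only [Finset.mem_image, Finset.mem_filter] at hx
        rcases hx with ⟨i, ⟨_, hi⟩, rfl⟩
        exact Finset.mem_range.2 hi
    _ = k := Finset.card_range k

/-- coverage: if some selected index has a low noise, then some index with low noise
has low rank w.r.t. the tie-broken key. -/
lemma coverage (θ cu z : Fin m → ℝ) (k : ℕ) (hk : 1 ≤ k) (T : Finset (Fin m))
    (hcard : T.card = k)
    (hsel : ∀ i ∈ T, ∀ j ∉ T, θ j + z j ≤ θ i + z i)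
    (i : Fin m) (hiT : i ∈ T) (hbad : z i < -cu i) :
    ∃ i', z i' < -cu i' ∧
      (univ.filter fun j => mkKey i' (θ i') (cu i') (z i')
        < mkKey j (θ j) (cu j) (z j)).card < k := by
  classical
  set B : Finset (Fin m) := univ.filter (fun j => z j < -cu j) with hB
  have hiB : i ∈ B := by simp [hB, hbad]
  obtain ⟨i', hi'B, hmax⟩ := B.exists_max_image
    (fun j => mkKey j (θ j) (cu j) (z j)) ⟨i, hiB⟩
  have hbad' : z i' < -cu i' := by simpa [hB] using hi'B
  refine ⟨i', hbad', ?_⟩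
  have hsub : (univ.filter fun j => mkKey i' (θ i') (cu i') (z i')
      < mkKey j (θ j) (cu j) (z j)) ⊆ T.erase i := by
    intro j hj
    simp only [Finset.mem_filter, Finset.mem_univ, true_and] at hj
    have hjgood : ¬ z j < -cu j := by
      intro hjb
      have : j ∈ B := by simp [hB, hjb]
      exact absurd (lt_of_lt_of_le hj (hmax j this)) (lt_irrefl _)
    have hYlt : θ i' + z i' < θ j + z j := by
      rcases mkKey_lt_iff.1 hj with h | ⟨_, h⟩
      · exact h
      · rcases h with ⟨h1, h2⟩ | ⟨h1, _⟩
        · exact absurd h2 hjgood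
        · exact absurd (h1.1 hbad') hjgood
    have hYi : θ i + z i ≤ θ i' + z i' := fst_le_of_mkKey_le (hmax i hiB)
    have hjT : j ∈ T := by
      by_contra hjT
      exact absurd (hsel i hiT j hjT) (by linarith)
    have hji : j ≠ i := by
      intro h; subst h; linarith
    exact Finset.mem_erase.2 ⟨hji, hjT⟩
  have := Finset.card_le_card hsub
  rw [Finset.card_erase_of_mem hiT, hcard] at this
  omega


lemma card_attach_filter (s : Finset (Fin m)) (p : Fin m → Prop) [DecidablePred p] :
    ((univ : Finset {x // x ∈ s}).filter fun j => p j.1).card = (s.filter p).card := by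
  apply Finset.card_bij (fun (j : {x // x ∈ s}) _ => j.1)
  · intro a ha
    simp only [Finset.mem_filter, Finset.mem_univ, true_and] at ha
    exact Finset.mem_filter.2 ⟨a.2, ha⟩
  · intro a _ b _ h
    exact Subtype.ext h
  · intro b hb
    simp only [Finset.mem_filter] at hb
    exact ⟨⟨b, hb.1⟩, by simp [hb.2], rfl⟩

lemma compl_filter_card (i : Fin m) (p : Fin m → Prop) [DecidablePred p] :
    ((univ : Finset {x // x ∈ ({i}ᶜ : Finset (Fin m))}).filter fun j => p j.1).card
      = (univ.filter fun j => j ≠ i ∧ p j).card := by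
  rw [card_attach_filter]
  congr 1
  ext j
  simp [Finset.mem_filter, and_comm]

end Stmt4Aux

theorem stmt4 {Ω : Type*} [MeasurableSpace Ω] (P : Measure Ω) [IsProbabilityMeasure P]
    (m k : ℕ) (hk : 1 ≤ k) (hkm : k ≤ m)
    (Z : Fin m → Ω → ℝ) (hZmeas : ∀ i, Measurable (Z i))
    (hindep : iIndepFun Z P)
    (θ : Fin m → ℝ) (cl cu : Fin m → ℝ) (hcl : ∀ i, 0 < cl i) (hcu : ∀ i, 0 < cu i)
    (lamL lamU : ℝ) (hlamL : lamL ∈ Set.Ioo (0:ℝ) 1) (hlamU : lamU ∈ Set.Ioo (0:ℝ) 1)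
    (htailL : ∀ i, P {ω | cl i < Z i ω} ≤ ENNReal.ofReal lamL)
    (htailU : ∀ i, P {ω | Z i ω < -cu i} ≤ ENNReal.ofReal lamU)
    (S : Ω → Finset (Fin m))
    (hScard : ∀ ω, (S ω).card = k)
    (hSsel : ∀ ω, ∀ i ∈ S ω, ∀ j ∉ S ω, θ j + Z j ω ≤ θ i + Z i ω) :
    P {ω | ∃ i ∈ S ω, θ i ∉ Set.Icc (θ i + Z i ω - cl i) (θ i + Z i ω + cu i)}
      ≤ ENNReal.ofReal (m * lamL + k * lamU) := by
  classical
  set key : Ω → Fin m → Stmt4Aux.K m :=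
    fun ω j => Stmt4Aux.mkKey j (θ j) (cu j) (Z j ω) with hkeydef
  set lowk : Fin m → Stmt4Aux.K m :=
    fun i => Stmt4Aux.mkKey i (θ i) (cu i) (-(cu i)) with hlowkdef
  set A : Fin m → Set Ω := fun i => {ω | Z i ω < -cu i} with hAdef
  set Eh : Fin m → Set Ω :=
    fun i => {ω | (univ.filter fun j => key ω i < key ω j).card < k} with hEhdef
  set El : Fin m → Set Ω :=
    fun i => {ω | (univ.filter fun j => j ≠ i ∧ lowk i < key ω j).card < k} with hEldef
  set L : ℝ≥0∞ := ENNReal.ofReal lamU with hLdef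
  have hL1 : L ≤ 1 := by
    rw [hLdef, ← ENNReal.ofReal_one]
    exact ENNReal.ofReal_le_ofReal hlamU.2.le
  -- measurability of A
  have hAmeas : ∀ i, MeasurableSet (A i) := fun i =>
    measurableSet_lt (hZmeas i) measurable_const
  -- measurability of key comparison sets
  have hkeyLtMeas : ∀ i j : Fin m, MeasurableSet {ω | key ω i < key ω j} := by
    intro i j
    have hset : {ω | key ω i < key ω j} =
        ({ω | θ i + Z i ω < θ j + Z j ω} ∪
          ({ω | θ i + Z i ω = θ j + Z j ω} ∩
            (({ω | Z i ω < -cu i}ᶜ ∩ {ω | Z j ω < -cu j}) ∪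
              ((({ω | Z i ω < -cu i} ∩ {ω | Z j ω < -cu j}) ∪
                 ({ω | Z i ω < -cu i}ᶜ ∩ {ω | Z j ω < -cu j}ᶜ)) ∩ {ω : Ω | j < i})))) := by
      ext ω
      simp only [hkeydef, Stmt4Aux.mkKey_lt_iff, Set.mem_union, Set.mem_inter_iff,
        Set.mem_setOf_eq, Set.mem_compl_iff]
      tauto
    rw [hset]
    have m1 : MeasurableSet {ω | θ i + Z i ω < θ j + Z j ω} :=
      measurableSet_lt (by fun_prop) (by fun_prop)
    have m2 : MeasurableSet {ω | θ i + Z i ω = θ j + Z j ω} :=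
      measurableSet_eq_fun (by fun_prop) (by fun_prop)
    have m3 : ∀ l : Fin m, MeasurableSet {ω | Z l ω < -cu l} := fun l =>
      measurableSet_lt (hZmeas l) measurable_const
    have m5 : MeasurableSet {ω : Ω | j < i} := by
      by_cases h : j < i
      · simp only [h, Set.setOf_true]; exact MeasurableSet.univ
      · simp only [h, Set.setOf_false]; exact MeasurableSet.empty
    exact m1.union (m2.inter ((((m3 i).compl.inter (m3 j)).union
      ((((m3 i).inter (m3 j)).union ((m3 i).compl.inter (m3 j).compl)).inter m5))))
  have hgmeas : ∀ i, Measurable (fun ω => ((univ.filter fun j => key ω i < key ω j).card : ℕ)) := by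
    intro i
    have : (fun ω => ((univ.filter fun j => key ω i < key ω j).card : ℕ)) =
        fun ω => ∑ j, if key ω i < key ω j then 1 else 0 := by
      funext ω; rw [Finset.card_filter]
    rw [this]
    exact Finset.measurable_sum _ fun j _ =>
      Measurable.ite (hkeyLtMeas i j) measurable_const measurable_const
  have hEhMeas : ∀ i, MeasurableSet (Eh i) := by
    intro i
    exact (hgmeas i) (measurableSet_Iio (a := k))
  -- measurability of lowk comparison sets (in ℝ)
  have hlowLtMeas : ∀ i j : Fin m,
      MeasurableSet {s : ℝ | lowk i < Stmt4Aux.mkKey j (θ j) (cu j) s} := by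
    intro i j
    have hirr : ¬ (-(cu i) < -(cu i)) := lt_irrefl _
    have hset : {s : ℝ | lowk i < Stmt4Aux.mkKey j (θ j) (cu j) s} =
        ({s : ℝ | θ i + -(cu i) < θ j + s} ∪
          ({s : ℝ | θ i + -(cu i) = θ j + s} ∩
            ({s : ℝ | s < -cu j} ∪ ({s : ℝ | s < -cu j}ᶜ ∩ {s : ℝ | j < i})))) := by
      ext s
      simp only [hlowkdef, Stmt4Aux.mkKey_lt_iff, Set.mem_union, Set.mem_inter_iff,
        Set.mem_setOf_eq, Set.mem_compl_iff]
      tauto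
    rw [hset]
    have m1 : MeasurableSet {s : ℝ | θ i + -(cu i) < θ j + s} :=
      measurableSet_lt measurable_const (by fun_prop)
    have m2 : MeasurableSet {s : ℝ | θ i + -(cu i) = θ j + s} :=
      measurableSet_eq_fun measurable_const (by fun_prop)
    have m3 : MeasurableSet {s : ℝ | s < -cu j} := measurableSet_Iio
    have m5 : MeasurableSet {s : ℝ | j < i} := by
      by_cases h : j < i
      · simp only [h, Set.setOf_true]; exact MeasurableSet.univ
      · simp only [h, Set.setOf_false]; exact MeasurableSet.empty
    exact m1.union (m2.inter (m3.union (m3.compl.inter m5)))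
  have hlowKeyMeas : ∀ i j : Fin m, MeasurableSet {ω | lowk i < key ω j} := by
    intro i j
    exact (hZmeas j) (hlowLtMeas i j)
  have hElMeas : ∀ i, MeasurableSet (El i) := by
    intro i
    have : (fun ω => ((univ.filter fun j => j ≠ i ∧ lowk i < key ω j).card : ℕ)) =
        fun ω => ∑ j, if (j ≠ i ∧ lowk i < key ω j) then 1 else 0 := by
      funext ω; rw [Finset.card_filter]
    have hm : Measurable (fun ω => ((univ.filter fun j => j ≠ i ∧ lowk i < key ω j).card : ℕ)) := by
      rw [this]
      refine Finset.measurable_sum _ fun j _ => ?_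
      by_cases hji : j = i
      · subst hji; simp only [ne_eq, not_true_eq_false, false_and, if_false]
        exact measurable_const
      · have : (fun ω => if (j ≠ i ∧ lowk i < key ω j) then (1:ℕ) else 0) =
            fun ω => if lowk i < key ω j then 1 else 0 := by
          funext ω; simp [hji]
        rw [this]
        exact Measurable.ite (hlowKeyMeas i j) measurable_const measurable_const
    exact hm (measurableSet_Iio (a := k))
  -- the per-index inequality
  have hperi : ∀ i, P (Eh i ∩ A i) ≤ L * P (Eh i) := by
    intro i
    -- pointwise inclusions
    have hsub1 : Eh i ∩ A i ⊆ El i ∩ A i := by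
      rintro ω ⟨h1, h2⟩
      refine ⟨?_, h2⟩
      simp only [hEhdef, Set.mem_setOf_eq] at h1
      simp only [hEldef, Set.mem_setOf_eq]
      refine lt_of_le_of_lt (Finset.card_le_card ?_) h1
      intro j hj
      simp only [Finset.mem_filter, Finset.mem_univ, true_and] at hj ⊢
      have h2' : Z i ω < -cu i := h2
      have hlt : key ω i < lowk i :=
        Stmt4Aux.mkKey_lt_iff.2 (Or.inl (by linarith))
      exact hlt.trans hj.2
    have hsub2 : El i ∩ (A i)ᶜ ⊆ Eh i := by
      rintro ω ⟨h1, h2⟩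
      simp only [hEldef, Set.mem_setOf_eq] at h1
      simp only [hEhdef, Set.mem_setOf_eq]
      refine lt_of_le_of_lt (Finset.card_le_card ?_) h1
      intro j hj
      simp only [Finset.mem_filter, Finset.mem_univ, true_and] at hj ⊢
      have hji : j ≠ i := by
        rintro rfl
        exact lt_irrefl _ hj
      refine ⟨hji, lt_of_le_of_lt ?_ hj⟩
      -- lowk i ≤ key ω i
      have hZB : ¬ Z i ω < -cu i := h2
      rcases lt_or_eq_of_le (le_of_not_gt hZB) with hlt | heq
      · exact le_of_lt (Stmt4Aux.mkKey_lt_iff.2 (Or.inl (by linarith)))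
      · exact le_of_eq (by
          show Stmt4Aux.mkKey i (θ i) (cu i) (-(cu i)) = Stmt4Aux.mkKey i (θ i) (cu i) (Z i ω)
          rw [heq])
    -- independence
    have hind := (hindep.indepFun_finset {i} ({i}ᶜ) disjoint_compl_right hZmeas)
    set X : Ω → ({i} : Finset (Fin m)) → ℝ := fun a j => Z j a with hXdef
    set W : Ω → ({i}ᶜ : Finset (Fin m)) → ℝ := fun a j => Z j a with hWdef
    set SA : Set (({i} : Finset (Fin m)) → ℝ) :=
      {v | v ⟨i, Finset.mem_singleton_self i⟩ < -cu i} with hSAdef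
    set SC : Set (({i}ᶜ : Finset (Fin m)) → ℝ) :=
      {v | ((univ : Finset {x // x ∈ ({i}ᶜ : Finset (Fin m))}).filter
        fun j => lowk i < Stmt4Aux.mkKey j.1 (θ j.1) (cu j.1) (v j)).card < k} with hSCdef
    have hSAmeas : MeasurableSet SA :=
      measurableSet_lt (measurable_pi_apply _) measurable_const
    have hSCmeas : MeasurableSet SC := by
      have hcard : (fun v : (({i}ᶜ : Finset (Fin m)) → ℝ) =>
          (((univ : Finset {x // x ∈ ({i}ᶜ : Finset (Fin m))}).filter
            fun j => lowk i < Stmt4Aux.mkKey j.1 (θ j.1) (cu j.1) (v j)).card : ℕ)) =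
          fun v => ∑ j, if lowk i < Stmt4Aux.mkKey j.1 (θ j.1) (cu j.1) (v j) then 1 else 0 := by
        funext v; rw [Finset.card_filter]
      have hm : Measurable (fun v : (({i}ᶜ : Finset (Fin m)) → ℝ) =>
          (((univ : Finset {x // x ∈ ({i}ᶜ : Finset (Fin m))}).filter
            fun j => lowk i < Stmt4Aux.mkKey j.1 (θ j.1) (cu j.1) (v j)).card : ℕ)) := by
        rw [hcard]
        refine Finset.measurable_sum _ fun j _ => ?_
        refine Measurable.ite ?_ measurable_const measurable_const
        show MeasurableSet ((fun v : ({i}ᶜ : Finset (Fin m)) → ℝ => v j) ⁻¹'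
          {s : ℝ | lowk i < Stmt4Aux.mkKey j.1 (θ j.1) (cu j.1) s})
        exact (measurable_pi_apply j) (hlowLtMeas i j.1)
      exact hm (measurableSet_Iio (a := k))
    have hAeq : A i = X ⁻¹' SA := rfl
    have hEleq : El i = W ⁻¹' SC := by
      ext ω
      simp only [hEldef, Set.mem_setOf_eq, Set.mem_preimage, hSCdef, hWdef]
      rw [Stmt4Aux.compl_filter_card i (fun j => lowk i < key ω j)]
    have hmul1 : P (A i ∩ El i) = P (A i) * P (El i) := by
      rw [hAeq, hEleq]
      exact hind.measure_inter_preimage_eq_mul SA SC hSAmeas hSCmeas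
    have hmul2 : P ((A i)ᶜ ∩ El i) = P ((A i)ᶜ) * P (El i) := by
      have : (A i)ᶜ = X ⁻¹' SAᶜ := by rw [hAeq]; rfl
      rw [this, hEleq]
      exact hind.measure_inter_preimage_eq_mul SAᶜ SC hSAmeas.compl hSCmeas
    -- arithmetic
    have ha : P (A i) ≤ L := htailU i
    have e1 : P (Eh i ∩ A i) ≤ P (A i) * P (El i) := by
      rw [← hmul1]
      refine measure_mono ?_
      rintro ω ⟨h1, h2⟩
      exact ⟨h2, (hsub1 ⟨h1, h2⟩).1⟩
    have e2 : P (El i) * (1 - P (A i)) + P (Eh i ∩ A i) ≤ P (Eh i) := by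
      have hPC : P ((A i)ᶜ ∩ El i) = P (El i) * (1 - P (A i)) := by
        rw [hmul2, prob_compl_eq_one_sub (hAmeas i), mul_comm]
      have hdisj : Disjoint ((A i)ᶜ ∩ El i) (Eh i ∩ A i) := by
        refine Set.disjoint_left.2 ?_
        rintro ω ⟨hc, _⟩ ⟨_, haa⟩
        exact hc haa
      have hcup : ((A i)ᶜ ∩ El i) ∪ (Eh i ∩ A i) ⊆ Eh i := by
        rintro ω (⟨hc, hl⟩ | h)
        · exact hsub2 ⟨hl, hc⟩
        · exact h.1
      calc P (El i) * (1 - P (A i)) + P (Eh i ∩ A i)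
          = P ((A i)ᶜ ∩ El i) + P (Eh i ∩ A i) := by rw [hPC]
        _ = P (((A i)ᶜ ∩ El i) ∪ (Eh i ∩ A i)) :=
            (measure_union hdisj ((hEhMeas i).inter (hAmeas i))).symm
        _ ≤ P (Eh i) := measure_mono hcup
    calc P (Eh i ∩ A i)
        = P (Eh i ∩ A i) * (1 - L) + P (Eh i ∩ A i) * L := by
          rw [← mul_add, tsub_add_cancel_of_le hL1, mul_one]
      _ ≤ (P (A i) * P (El i)) * (1 - L) + P (Eh i ∩ A i) * L := by
          exact add_le_add_left (mul_le_mul_left e1 _) _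
      _ ≤ ((L * (1 - P (A i))) * P (El i)) + P (Eh i ∩ A i) * L := by
          refine add_le_add_left ?_ _
          have harith : P (A i) * (1 - L) ≤ L * (1 - P (A i)) :=
            mul_le_mul' ha (tsub_le_tsub_left ha 1)
          calc (P (A i) * P (El i)) * (1 - L) = (P (A i) * (1 - L)) * P (El i) := by ring
            _ ≤ (L * (1 - P (A i))) * P (El i) := mul_le_mul_left harith _
      _ = L * (P (El i) * (1 - P (A i)) + P (Eh i ∩ A i)) := by ring
      _ ≤ L * P (Eh i) := mul_le_mul_right e2 L
  -- sum of P (Eh i) is at most k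
  have hsumEh : ∑ i, P (Eh i) ≤ (k : ℝ≥0∞) := by
    have hpt : ∀ ω, ∑ i, (Eh i).indicator (1 : Ω → ℝ≥0∞) ω ≤ (k : ℝ≥0∞) := by
      intro ω
      have h1 : ∑ i, (Eh i).indicator (1 : Ω → ℝ≥0∞) ω
          = ((univ.filter fun i => ω ∈ Eh i).card : ℝ≥0∞) := by
        rw [Finset.card_filter, Nat.cast_sum]
        refine Finset.sum_congr rfl fun i _ => ?_
        by_cases h : ω ∈ Eh i <;> simp [Set.indicator_apply, h]
      rw [h1]
      have h2 : (univ.filter fun i => ω ∈ Eh i).card ≤ k := by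
        have hinj : Function.Injective (key ω) := fun a b h => Stmt4Aux.mkKey_inj h
        simpa [hEhdef] using Stmt4Aux.card_low_rank_le (key ω) hinj k
      exact_mod_cast h2
    calc ∑ i, P (Eh i)
        = ∑ i, ∫⁻ ω, (Eh i).indicator (1 : Ω → ℝ≥0∞) ω ∂P := by
          refine Finset.sum_congr rfl fun i _ => ?_
          rw [lintegral_indicator_one (hEhMeas i)]
      _ = ∫⁻ ω, ∑ i, (Eh i).indicator (1 : Ω → ℝ≥0∞) ω ∂P :=
          (lintegral_finset_sum _ fun i _ => measurable_one.indicator (hEhMeas i)).symm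
      _ ≤ ∫⁻ _, (k : ℝ≥0∞) ∂P := lintegral_mono hpt
      _ = (k : ℝ≥0∞) := by simp
  -- covering
  have hcover : {ω | ∃ i ∈ S ω, θ i ∉ Set.Icc (θ i + Z i ω - cl i) (θ i + Z i ω + cu i)} ⊆
      (⋃ i, {ω | cl i < Z i ω}) ∪ ⋃ i, (Eh i ∩ A i) := by
    rintro ω ⟨i, hiS, hnot⟩
    have hcase : cl i < Z i ω ∨ Z i ω < -cu i := by
      simp only [Set.mem_Icc, not_and_or, not_le] at hnot
      rcases hnot with h | h
      · left; linarith
      · right; linarith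
    rcases hcase with h | h
    · exact Or.inl (Set.mem_iUnion.2 ⟨i, h⟩)
    · refine Or.inr (Set.mem_iUnion.2 ?_)
      obtain ⟨i', hbad, hcnt⟩ := Stmt4Aux.coverage θ cu (fun j => Z j ω) k hk (S ω)
        (hScard ω) (fun a ha b hb => hSsel ω a ha b hb) i hiS h
      exact ⟨i', hcnt, hbad⟩
  -- final computation
  calc P {ω | ∃ i ∈ S ω, θ i ∉ Set.Icc (θ i + Z i ω - cl i) (θ i + Z i ω + cu i)}
      ≤ P ((⋃ i, {ω | cl i < Z i ω}) ∪ ⋃ i, (Eh i ∩ A i)) := measure_mono hcover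
    _ ≤ P (⋃ i, {ω | cl i < Z i ω}) + P (⋃ i, (Eh i ∩ A i)) := measure_union_le _ _
    _ ≤ (∑ i, P {ω | cl i < Z i ω}) + ∑ i, P (Eh i ∩ A i) :=
        add_le_add (measure_iUnion_fintype_le _ _) (measure_iUnion_fintype_le _ _)
    _ ≤ (m : ℝ≥0∞) * ENNReal.ofReal lamL + L * (k : ℝ≥0∞) := by
        refine add_le_add ?_ ?_
        · calc ∑ i, P {ω | cl i < Z i ω} ≤ ∑ _i : Fin m, ENNReal.ofReal lamL :=
                Finset.sum_le_sum fun i _ => htailL i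
            _ = (m : ℝ≥0∞) * ENNReal.ofReal lamL := by
                rw [Finset.sum_const, Finset.card_univ, Fintype.card_fin, nsmul_eq_mul]
        · calc ∑ i, P (Eh i ∩ A i) ≤ ∑ i, L * P (Eh i) :=
                Finset.sum_le_sum fun i _ => hperi i
            _ = L * ∑ i, P (Eh i) := by rw [Finset.mul_sum]
            _ ≤ L * (k : ℝ≥0∞) := mul_le_mul_right hsumEh L
    _ = ENNReal.ofReal (m * lamL + k * lamU) := by
        rw [ENNReal.ofReal_add (mul_nonneg (Nat.cast_nonneg m) hlamL.1.le)
          (mul_nonneg (Nat.cast_nonneg k) hlamU.1.le),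
          ENNReal.ofReal_mul (Nat.cast_nonneg m), ENNReal.ofReal_mul (Nat.cast_nonneg k),
          ENNReal.ofReal_natCast, ENNReal.ofReal_natCast, hLdef, mul_comm L]
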